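/- For every zip tree t and key k, the tree delete k t is again a zip tree, rk (delete k t) ≤ rk t, and its set of keys equals (set t) \ {k}. -/

import Mathlib

/-- Ranked binary trees: each node stores a natural-number rank and a key. -/
inductive ZTree (α : Type*) where
  | empty : ZTree α
  | node (rank : ℕ) (key : α) (left right : ZTree α) : ZTree α

namespace ZTree

/-- The rank of the root of a tree, with `rk empty = -1`. -/
def rk {α : Type*} : ZTree α → ℤ
  | .empty => -1
  | .node r _ _ _ => (r : ℤ)

/-- The set of keys occurring in a tree. -/
def keys {α : Type*} : ZTree α → Set α
  | .empty => ∅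
  | .node _ k l r => {k} ∪ l.keys ∪ r.keys

/-- The left child of a tree (the empty tree for the empty tree). -/
def left {α : Type*} : ZTree α → ZTree α
  | .empty => .empty
  | .node _ _ l _ => l

/-- The right child of a tree (the empty tree for the empty tree). -/
def right {α : Type*} : ZTree α → ZTree α
  | .empty => .empty
  | .node _ _ _ r => r

/-- The number of nodes of a tree. -/
def size {α : Type*} : ZTree α → ℕ
  | .empty => 0
  | .node _ _ l r => l.size + r.size + 1

/-- The zip tree invariant: binary-search-tree property on keys, the rank of a left
child is strictly smaller than the rank of its parent, and the rank of a right child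
is at most the rank of its parent. -/
def IsZipTree {α : Type*} [LinearOrder α] : ZTree α → Prop
  | .empty => True
  | .node rank k l r =>
      (∀ x ∈ l.keys, x < k) ∧ (∀ x ∈ r.keys, k < x) ∧
      l.rk < (rank : ℤ) ∧ r.rk ≤ (rank : ℤ) ∧ l.IsZipTree ∧ r.IsZipTree

/-- Zip-tree insertion. -/
def insert {α : Type*} [LinearOrder α] (r : ℕ) (k : α) : ZTree α → ZTree α
  | .empty => .node r k .empty .empty
  | .node rank key l rt =>
    if k = key then .node rank key l rt
    else if k < key then
      match ZTree.insert r k l with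
      | .empty => .node rank key .empty rt
      | .node tr tk tl trr =>
          if (tr : ℤ) < (rank : ℤ) then .node rank key (.node tr tk tl trr) rt
          else .node tr tk tl (.node rank key trr rt)
    else
      match ZTree.insert r k rt with
      | .empty => .node rank key l .empty
      | .node tr tk tl trr =>
          if (tr : ℤ) ≤ (rank : ℤ) then .node rank key l (.node tr tk tl trr)
          else .node tr tk (.node rank key l tl) trr

/-- Zipping two trees. -/
def zip {α : Type*} (k : α) : ZTree α → ZTree α → ZTree α
  | .empty, .empty => .empty
  | .empty, t => t
  | t, .empty => t
  | .node r1 k1 l1 rt1, .node r2 k2 l2 rt2 =>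
    if r1 < r2 then
      .node r2 k2 (ZTree.zip k (.node r1 k1 l1 rt1) l2) rt2
    else
      .node r1 k1 l1 (ZTree.zip k rt1 (.node r2 k2 l2 rt2))
  termination_by t1 t2 => t1.size + t2.size
  decreasing_by
    · simp [ZTree.size]
    · simp [ZTree.size]

/-- Zip-tree deletion. -/
def delete {α : Type*} [LinearOrder α] (k : α) : ZTree α → ZTree α
  | .empty => .empty
  | .node rank key l r =>
    if k < key then .node rank key (ZTree.delete k l) r
    else if key < k then .node rank key l (ZTree.delete k r)
    else ZTree.zip k l r

end ZTree

theorem zip_spec {α : Type*} [LinearOrder α] (k : α) (l r : ZTree α)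
    (hl : l.IsZipTree) (hr : r.IsZipTree)
    (hx : ∀ x ∈ l.keys, ∀ y ∈ r.keys, x < y) :
    (ZTree.zip k l r).IsZipTree ∧ (ZTree.zip k l r).rk ≤ max l.rk r.rk ∧
    (ZTree.zip k l r).keys = l.keys ∪ r.keys := by
  induction l, r using ZTree.zip.induct with
  | case1 => simp [ZTree.zip, ZTree.IsZipTree, ZTree.keys]
  | case2 t h =>
    cases t with
    | empty => exact absurd rfl h
    | node r2 k2 l2 rt2 =>
      rw [show ZTree.zip k .empty (.node r2 k2 l2 rt2) = .node r2 k2 l2 rt2 from by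
        rw [ZTree.zip] <;> simp]
      refine ⟨hr, ?_, ?_⟩
      · simp [ZTree.rk]
      · simp [ZTree.zip, ZTree.keys]
  | case3 t h1 =>
    cases t with
    | empty => exact absurd rfl h1
    | node r1 k1 l1 rt1 =>
      rw [show ZTree.zip k (.node r1 k1 l1 rt1) .empty = .node r1 k1 l1 rt1 from by
        rw [ZTree.zip] <;> simp]
      refine ⟨hl, ?_, ?_⟩
      · simp [ZTree.rk]
      · simp [ZTree.zip, ZTree.keys]
  | case4 r1 k1 l1 rt1 r2 k2 l2 rt2 hlt ih =>
    obtain ⟨hl2k, hr2k, hl2rk, hr2rk, hl2, hr2⟩ := hr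
    have cross : ∀ x ∈ (ZTree.node r1 k1 l1 rt1).keys, ∀ y ∈ l2.keys, x < y := by
      intro x hxm y hy
      exact hx x hxm y (by simp [ZTree.keys]; tauto)
    obtain ⟨ihz, ihrk, ihkeys⟩ := ih hl hl2 cross
    have hzip : ZTree.zip k (ZTree.node r1 k1 l1 rt1) (ZTree.node r2 k2 l2 rt2) =
        ZTree.node r2 k2 (ZTree.zip k (ZTree.node r1 k1 l1 rt1) l2) rt2 := by
      rw [ZTree.zip]; simp [hlt]
    rw [hzip]
    refine ⟨⟨?_, hr2k, ?_, hr2rk, ihz, hr2⟩, ?_, ?_⟩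
    · intro x hxm
      rw [ihkeys] at hxm
      rcases hxm with hxm | hxm
      · exact hx x hxm k2 (by simp [ZTree.keys])
      · exact hl2k x hxm
    · refine lt_of_le_of_lt ihrk (max_lt ?_ hl2rk)
      simp [ZTree.rk]; exact_mod_cast hlt
    · simp [ZTree.rk]
    · rw [ZTree.keys, ihkeys]
      ext x
      simp [ZTree.keys]
      tauto
  | case5 r1 k1 l1 rt1 r2 k2 l2 rt2 hlt ih =>
    obtain ⟨hl1k, hr1k, hl1rk, hr1rk, hl1, hr1⟩ := hl
    have cross : ∀ x ∈ rt1.keys, ∀ y ∈ (ZTree.node r2 k2 l2 rt2).keys, x < y := by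
      intro x hxm y hy
      exact hx x (by simp [ZTree.keys]; tauto) y hy
    obtain ⟨ihz, ihrk, ihkeys⟩ := ih hr1 hr cross
    have hzip : ZTree.zip k (ZTree.node r1 k1 l1 rt1) (ZTree.node r2 k2 l2 rt2) =
        ZTree.node r1 k1 l1 (ZTree.zip k rt1 (ZTree.node r2 k2 l2 rt2)) := by
      rw [ZTree.zip]; simp [hlt]
    rw [hzip]
    refine ⟨⟨hl1k, ?_, hl1rk, ?_, hl1, ihz⟩, ?_, ?_⟩
    · intro x hxm
      rw [ihkeys] at hxm
      rcases hxm with hxm | hxm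
      · exact hr1k x hxm
      · exact hx k1 (by simp [ZTree.keys]) x hxm
    · refine le_trans ihrk (max_le hr1rk ?_)
      simp [ZTree.rk]; exact_mod_cast not_lt.mp hlt
    · simp [ZTree.rk]
    · rw [ZTree.keys, ihkeys]
      ext x
      simp [ZTree.keys]
      tauto

theorem delete_correct {α : Type*} [LinearOrder α] (t : ZTree α)
    (ht : t.IsZipTree) (k : α) :
    (ZTree.delete k t).IsZipTree ∧
    (ZTree.delete k t).rk ≤ t.rk ∧
    (ZTree.delete k t).keys = t.keys \ {k} := by
  induction t with
  | empty => simp [ZTree.delete, ZTree.IsZipTree, ZTree.keys]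
  | node rank key l r ihl ihr =>
    obtain ⟨hlk, hrk, hlrk, hrrk, hl, hr⟩ := ht
    obtain ⟨ihlz, ihlrk, ihlkeys⟩ := ihl hl
    obtain ⟨ihrz, ihrrk, ihrkeys⟩ := ihr hr
    rcases lt_trichotomy k key with hk | hk | hk
    · rw [ZTree.delete, if_pos hk]
      refine ⟨⟨?_, hrk, lt_of_le_of_lt ihlrk hlrk, hrrk, ihlz, hr⟩, ?_, ?_⟩
      · intro x hx
        rw [ihlkeys] at hx
        exact hlk x hx.1
      · simp [ZTree.rk]
      · ext x
        have h1 : x = key → x ≠ k := by rintro rfl; exact ne_of_gt hk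
        have h2 : x ∈ r.keys → x ≠ k := fun h => ne_of_gt (lt_trans hk (hrk x h))
        simp only [ZTree.keys, ihlkeys, Set.mem_union, Set.mem_diff,
          Set.mem_singleton_iff]
        tauto
    · subst hk
      rw [ZTree.delete, if_neg (lt_irrefl k), if_neg (lt_irrefl k)]
      obtain ⟨hz, hzrk, hzkeys⟩ := zip_spec k l r hl hr
        (fun x hx y hy => lt_trans (hlk x hx) (hrk y hy))
      refine ⟨hz, le_trans hzrk ?_, ?_⟩
      · exact max_le (le_of_lt hlrk) hrrk
      · rw [hzkeys]
        ext x
        have h1 : x ∈ l.keys → x ≠ k := fun h => ne_of_lt (hlk x h)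
        have h2 : x ∈ r.keys → x ≠ k := fun h => ne_of_gt (hrk x h)
        simp only [ZTree.keys, Set.mem_union, Set.mem_diff, Set.mem_singleton_iff]
        tauto
    · rw [ZTree.delete, if_neg (not_lt.mpr (le_of_lt hk)), if_pos hk]
      refine ⟨⟨hlk, ?_, hlrk, le_trans ihrrk hrrk, hl, ihrz⟩, ?_, ?_⟩
      · intro x hx
        rw [ihrkeys] at hx
        exact hrk x hx.1
      · simp [ZTree.rk]
      · ext x
        have h1 : x = key → x ≠ k := by rintro rfl; exact ne_of_lt hk
        have h2 : x ∈ l.keys → x ≠ k := fun h => ne_of_lt (lt_trans (hlk x h) hk)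
        simp only [ZTree.keys, ihrkeys, Set.mem_union, Set.mem_diff,
          Set.mem_singleton_iff]
        tauto
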